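/- Let I = [−1,1], K ∈ C(I²) continuously differentiable in its first variable, κ ∈ ℝ, and u ∈ L²(I). Define (A_ε u)(s) := ∫_{−1}^s K(s,t)e^{iκ(s−t)}u(t)dt + (−1)^ε ∫_s^1 K(s,t)e^{iκ(t−s)}u(t)dt for ε ∈ {0,1}. Then for each s ∈ (−1,1), the derivative satisfies D(A_ε u)(s) = (A_ε^{(1)} u)(s) + iκ (A_{ε̃} u)(s) + 2ε K(s,s)u(s), where A_ε^{(1)} is the analogous operator with kernel ∂K/∂s, and ε̃ = (ε+1) mod 2. -/

import Mathlib

open MeasureTheory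

lemma aux_fixed (f f' : ℝ → ℝ → ℂ)
    (hf : Continuous fun p : ℝ × ℝ => f p.1 p.2)
    (hf' : Continuous fun p : ℝ × ℝ => f' p.1 p.2)
    (hder : ∀ t s : ℝ, HasDerivAt (fun z => f z t) (f' s t) s)
    (a b s : ℝ) :
    HasDerivAt (fun z => ∫ t in a..b, f z t) (∫ t in a..b, f' s t) s := by
  obtain ⟨C, hC⟩ := ((isCompact_Icc (a := s - 1) (b := s + 1)).prod
    (isCompact_uIcc (a := a) (b := b))).exists_bound_of_continuousOn hf'.continuousOn
  refine (intervalIntegral.hasDerivAt_integral_of_dominated_loc_of_deriv_le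
    (F := f) (F' := f') (bound := fun _ => C) (Metric.ball_mem_nhds s one_pos) ?_ ?_ ?_ ?_ ?_ ?_).2
  · exact Filter.Eventually.of_forall fun x =>
      (hf.comp (Continuous.prodMk_right x)).aestronglyMeasurable
  · exact (hf.comp (Continuous.prodMk_right s)).intervalIntegrable _ _
  · exact (hf'.comp (Continuous.prodMk_right s)).aestronglyMeasurable
  · refine Filter.Eventually.of_forall fun t ht x hx => hC (x, t) ?_
    refine ⟨?_, Set.uIoc_subset_uIcc ht⟩
    have := Metric.mem_ball.mp hx
    rw [Real.dist_eq] at this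
    constructor <;> simp <;> [linarith [abs_le.mp this.le]; linarith [abs_le.mp this.le]]
  · exact intervalIntegrable_const
  · exact Filter.Eventually.of_forall fun t ht x hx => hder t x

lemma aux_corner (f : ℝ → ℝ → ℂ)
    (hf : Continuous fun p : ℝ × ℝ => f p.1 p.2) (s : ℝ) :
    HasDerivAt (fun z => ∫ t in s..z, f z t) (f s s) s := by
  rw [hasDerivAt_iff_isLittleO, Asymptotics.isLittleO_iff]
  intro c hc
  obtain ⟨δ, hδpos, hδ⟩ := Metric.continuousAt_iff.mp (hf.continuousAt (x := (s, s))) c hc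
  filter_upwards [Metric.ball_mem_nhds s hδpos] with z hz
  have hzs : |z - s| < δ := by rw [← Real.dist_eq]; exact Metric.mem_ball.mp hz
  have hint : IntervalIntegrable (f z) volume s z :=
    (hf.comp (Continuous.prodMk_right z)).intervalIntegrable _ _
  have key : (∫ t in s..z, f z t) - (∫ t in s..s, f s t) - (z - s) • f s s
      = ∫ t in s..z, (f z t - f s s) := by
    rw [intervalIntegral.integral_same, sub_zero,
      intervalIntegral.integral_sub hint intervalIntegrable_const,
      intervalIntegral.integral_const]
  rw [key, Real.norm_eq_abs]
  have : ∀ t ∈ Set.uIoc s z, ‖f z t - f s s‖ ≤ c := by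
    intro t ht
    have habs : |t - s| ≤ |z - s| := by
      rcases Set.mem_uIoc.mp ht with ⟨h1, h2⟩ | ⟨h1, h2⟩
      · rw [abs_of_nonneg (by linarith)]
        exact le_trans (by linarith [le_abs_self (z - s)]) le_rfl
      · rw [abs_of_nonpos (by linarith)]
        exact le_trans (by linarith [neg_le_abs (z - s)]) le_rfl
    have hd : dist (z, t) (s, s) < δ := by
      rw [Prod.dist_eq]
      exact max_lt (by rwa [Real.dist_eq]) (by rw [Real.dist_eq]; linarith)
    have := hδ hd
    rw [dist_eq_norm] at this
    exact this.le
  calc ‖∫ t in s..z, (f z t - f s s)‖ ≤ c * |z - s| :=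
        intervalIntegral.norm_integral_le_of_norm_le_const this
    _ = c * ‖z - s‖ := by rw [Real.norm_eq_abs]

lemma aux_upper (f f' : ℝ → ℝ → ℂ)
    (hf : Continuous fun p : ℝ × ℝ => f p.1 p.2)
    (hf' : Continuous fun p : ℝ × ℝ => f' p.1 p.2)
    (hder : ∀ t s : ℝ, HasDerivAt (fun z => f z t) (f' s t) s)
    (a s : ℝ) :
    HasDerivAt (fun z => ∫ t in a..z, f z t) ((∫ t in a..s, f' s t) + f s s) s := by
  have h := (aux_fixed f f' hf hf' hder a s s).add (aux_corner f hf s)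
  have heq : (fun z => (∫ t in a..s, f z t) + ∫ t in s..z, f z t)
      = fun z => ∫ t in a..z, f z t := by
    funext z
    exact intervalIntegral.integral_add_adjacent_intervals
      ((hf.comp (Continuous.prodMk_right z)).intervalIntegrable _ _)
      ((hf.comp (Continuous.prodMk_right z)).intervalIntegrable _ _)
  rw [← heq]; exact h

lemma aux_lower (f f' : ℝ → ℝ → ℂ)
    (hf : Continuous fun p : ℝ × ℝ => f p.1 p.2)
    (hf' : Continuous fun p : ℝ × ℝ => f' p.1 p.2)
    (hder : ∀ t s : ℝ, HasDerivAt (fun z => f z t) (f' s t) s)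
    (b s : ℝ) :
    HasDerivAt (fun z => ∫ t in z..b, f z t) ((∫ t in s..b, f' s t) - f s s) s := by
  have h1 : HasDerivAt (fun z => ∫ t in z..s, f z t) (-f s s) s := by
    have h0 := (aux_corner f hf s).neg
    have : (fun z => -∫ t in s..z, f z t) = fun z => ∫ t in z..s, f z t := by
      funext z
      rw [intervalIntegral.integral_symm, neg_neg]
    rw [← this]; exact h0
  have h := h1.add (aux_fixed f f' hf hf' hder s b s)
  have heq : (fun z => (∫ t in z..s, f z t) + ∫ t in s..b, f z t)
      = fun z => ∫ t in z..b, f z t := by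
    funext z
    exact intervalIntegral.integral_add_adjacent_intervals
      ((hf.comp (Continuous.prodMk_right z)).intervalIntegrable _ _)
      ((hf.comp (Continuous.prodMk_right z)).intervalIntegrable _ _)
  change HasDerivAt (fun z => (∫ t in z..s, f z t) + ∫ t in s..b, f z t) _ s at h
  rw [heq] at h
  convert h using 1
  ring

theorem derivative_of_oscillatory_operator (K K' : ℝ → ℝ → ℂ)
    (hK : Continuous fun p : ℝ × ℝ => K p.1 p.2)
    (hK' : Continuous fun p : ℝ × ℝ => K' p.1 p.2)
    (hder : ∀ t s : ℝ, HasDerivAt (fun z => K z t) (K' s t) s)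
    (κ : ℝ) (u : ℝ → ℂ) (hu : Continuous u)
    (ε : ℕ) (hε : ε = 0 ∨ ε = 1) (s : ℝ) (hs : s ∈ Set.Ioo (-1 : ℝ) 1) :
    HasDerivAt
      (fun z => (∫ t in (-1 : ℝ)..z, K z t * Complex.exp (Complex.I * κ * (z - t)) * u t)
        + (-1 : ℂ) ^ ε * ∫ t in z..(1 : ℝ), K z t * Complex.exp (Complex.I * κ * (t - z)) * u t)
      (((∫ t in (-1 : ℝ)..s, K' s t * Complex.exp (Complex.I * κ * (s - t)) * u t)
          + (-1 : ℂ) ^ ε * ∫ t in s..(1 : ℝ), K' s t * Complex.exp (Complex.I * κ * (t - s)) * u t)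
        + Complex.I * κ *
          ((∫ t in (-1 : ℝ)..s, K s t * Complex.exp (Complex.I * κ * (s - t)) * u t)
            + (-1 : ℂ) ^ ((ε + 1) % 2) *
              ∫ t in s..(1 : ℝ), K s t * Complex.exp (Complex.I * κ * (t - s)) * u t)
        + 2 * (ε : ℂ) * K s s * u s) s := by
  set f : ℝ → ℝ → ℂ := fun z t => K z t * Complex.exp (Complex.I * κ * (z - t)) * u t with hf_def
  set f' : ℝ → ℝ → ℂ := fun z t =>
    (K' z t + Complex.I * κ * K z t) * Complex.exp (Complex.I * κ * (z - t)) * u t with hf'_def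
  set g : ℝ → ℝ → ℂ := fun z t => K z t * Complex.exp (Complex.I * κ * (t - z)) * u t with hg_def
  set g' : ℝ → ℝ → ℂ := fun z t =>
    (K' z t - Complex.I * κ * K z t) * Complex.exp (Complex.I * κ * (t - z)) * u t with hg'_def
  have hexp1 : Continuous fun p : ℝ × ℝ => Complex.exp (Complex.I * κ * (↑p.1 - ↑p.2)) := by
    fun_prop
  have hexp2 : Continuous fun p : ℝ × ℝ => Complex.exp (Complex.I * κ * (↑p.2 - ↑p.1)) := by
    fun_prop
  have hu2 : Continuous fun p : ℝ × ℝ => u p.2 := hu.comp continuous_snd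
  have hfc : Continuous fun p : ℝ × ℝ => f p.1 p.2 := (hK.mul hexp1).mul hu2
  have hf'c : Continuous fun p : ℝ × ℝ => f' p.1 p.2 :=
    ((hK'.add ((continuous_const.mul hK))).mul hexp1).mul hu2
  have hgc : Continuous fun p : ℝ × ℝ => g p.1 p.2 := (hK.mul hexp2).mul hu2
  have hg'c : Continuous fun p : ℝ × ℝ => g' p.1 p.2 :=
    ((hK'.sub ((continuous_const.mul hK))).mul hexp2).mul hu2
  have hderf : ∀ t x : ℝ, HasDerivAt (fun z => f z t) (f' x t) x := by
    intro t x
    have he : HasDerivAt (fun z : ℝ => Complex.exp (Complex.I * κ * (↑z - ↑t)))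
        (Complex.I * κ * Complex.exp (Complex.I * κ * (↑x - ↑t))) x := by
      have h0 : HasDerivAt (fun w : ℂ => Complex.exp (Complex.I * κ * (w - ↑t)))
          (Complex.exp (Complex.I * κ * (↑x - ↑t)) * (Complex.I * κ * 1)) ↑x :=
        (((hasDerivAt_id (↑x : ℂ)).sub_const _).const_mul _).cexp
      have := h0.comp_ofReal
      convert this using 1
      ring
    have := ((hder t x).mul he).mul_const (u t)
    refine this.congr_deriv ?_
    simp only [hf'_def]
    ring
  have hderg : ∀ t x : ℝ, HasDerivAt (fun z => g z t) (g' x t) x := by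
    intro t x
    have he : HasDerivAt (fun z : ℝ => Complex.exp (Complex.I * κ * (↑t - ↑z)))
        (-(Complex.I * κ) * Complex.exp (Complex.I * κ * (↑t - ↑x))) x := by
      have h0 : HasDerivAt (fun w : ℂ => Complex.exp (Complex.I * κ * (↑t - w)))
          (Complex.exp (Complex.I * κ * (↑t - ↑x)) * (Complex.I * κ * (-1))) ↑x :=
        (((hasDerivAt_id (↑x : ℂ)).const_sub _).const_mul _).cexp
      have := h0.comp_ofReal
      convert this using 1
      ring
    have := ((hder t x).mul he).mul_const (u t)
    refine this.congr_deriv ?_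
    simp only [hg'_def]
    ring
  have d1 : HasDerivAt (fun z => ∫ t in (-1 : ℝ)..z, f z t)
      ((∫ t in (-1 : ℝ)..s, f' s t) + f s s) s :=
    aux_upper f f' hfc hf'c hderf (-1) s
  have d2 : HasDerivAt (fun z => ∫ t in z..(1 : ℝ), g z t)
      ((∫ t in s..(1 : ℝ), g' s t) - g s s) s :=
    aux_lower g g' hgc hg'c hderg 1 s
  have total := d1.add (d2.const_mul ((-1 : ℂ) ^ ε))
  have hfss : f s s = K s s * u s := by simp [hf_def]
  have hgss : g s s = K s s * u s := by simp [hg_def]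
  have split1 : (∫ t in (-1 : ℝ)..s, f' s t)
      = (∫ t in (-1 : ℝ)..s, K' s t * Complex.exp (Complex.I * κ * (s - t)) * u t)
        + Complex.I * κ * ∫ t in (-1 : ℝ)..s, K s t * Complex.exp (Complex.I * κ * (s - t)) * u t := by
    have int1 : IntervalIntegrable
        (fun t => K' s t * Complex.exp (Complex.I * κ * (s - t)) * u t) volume (-1) s := by
      apply Continuous.intervalIntegrable
      have h1 : Continuous fun t : ℝ => K' s t := hK'.comp (Continuous.prodMk_right s)
      fun_prop
    have int2 : IntervalIntegrable
        (fun t => Complex.I * κ * (K s t * Complex.exp (Complex.I * κ * (s - t)) * u t))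
        volume (-1) s := by
      apply Continuous.intervalIntegrable
      have h1 : Continuous fun t : ℝ => K s t := hK.comp (Continuous.prodMk_right s)
      fun_prop
    rw [← intervalIntegral.integral_const_mul, ← intervalIntegral.integral_add int1 int2]
    apply intervalIntegral.integral_congr
    intro t ht
    simp only [hf'_def]
    ring
  have split2 : (∫ t in s..(1 : ℝ), g' s t)
      = (∫ t in s..(1 : ℝ), K' s t * Complex.exp (Complex.I * κ * (t - s)) * u t)
        - Complex.I * κ * ∫ t in s..(1 : ℝ), K s t * Complex.exp (Complex.I * κ * (t - s)) * u t := by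
    have int1 : IntervalIntegrable
        (fun t => K' s t * Complex.exp (Complex.I * κ * (t - s)) * u t) volume s 1 := by
      apply Continuous.intervalIntegrable
      have h1 : Continuous fun t : ℝ => K' s t := hK'.comp (Continuous.prodMk_right s)
      fun_prop
    have int2 : IntervalIntegrable
        (fun t => Complex.I * κ * (K s t * Complex.exp (Complex.I * κ * (t - s)) * u t))
        volume s 1 := by
      apply Continuous.intervalIntegrable
      have h1 : Continuous fun t : ℝ => K s t := hK.comp (Continuous.prodMk_right s)
      fun_prop
    rw [← intervalIntegral.integral_const_mul, ← intervalIntegral.integral_sub int1 int2]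
    apply intervalIntegral.integral_congr
    intro t ht
    simp only [hg'_def]
    ring
  convert (show HasDerivAt (fun z => (∫ t in (-1 : ℝ)..z, f z t) + (-1 : ℂ) ^ ε * ∫ t in z..(1 : ℝ), g z t) _ s from total) using 1
  rw [split1, split2, hfss, hgss]
  rcases hε with rfl | rfl <;> norm_num <;> ring
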